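/- Let f : ℤ → ℂ and let m ≥ 1. Assume the Toeplitz matrices T_m(f) and T_{m+1}(f) are invertible. Then (V⁺_{m+1})² − V⁻_{m+1} · Ṽ⁻_{m+1} = V⁺_m · V⁺_{m+1}, where V⁺_j := (T_j(f)^{−1})_{1,1}, V⁻_j := (T_j(f)^{−1})_{j,1}, and Ṽ⁻_j := (T_j(f)^{−1})_{1,j}. -/
import Mathlib


open scoped BigOperators
open Matrix

/-- The `m × m` Toeplitz matrix `T_m(f)` with `(i,j)` entry `f(i-j)`. -/
noncomputable def Tmat (f : ℤ → ℂ) (m : ℕ) : Matrix (Fin m) (Fin m) ℂ :=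
  Matrix.of fun i j : Fin m => f (((i : ℕ) : ℤ) - ((j : ℕ) : ℤ))

/-- Identity (3.7) of Tracy–Widom:
`(V⁺_{m+1})² - V⁻_{m+1} Ṽ⁻_{m+1} = V⁺_m V⁺_{m+1}`, where `V⁺_j`, `V⁻_j`, `Ṽ⁻_j`
are the upper-left, lower-left, upper-right entries of `T_j(f)⁻¹`. -/
theorem toeplitz_V_identity (f : ℤ → ℂ) (m : ℕ) (hm : 1 ≤ m)
    (h1 : IsUnit (Tmat f m)) (h2 : IsUnit (Tmat f (m + 1))) :
    ((Tmat f (m + 1))⁻¹ ⟨0, by omega⟩ ⟨0, by omega⟩) ^ 2 -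
        (Tmat f (m + 1))⁻¹ ⟨m, by omega⟩ ⟨0, by omega⟩ *
          (Tmat f (m + 1))⁻¹ ⟨0, by omega⟩ ⟨m, by omega⟩ =
      (Tmat f m)⁻¹ ⟨0, by omega⟩ ⟨0, by omega⟩ *
        (Tmat f (m + 1))⁻¹ ⟨0, by omega⟩ ⟨0, by omega⟩ := by
  set M : Matrix (Fin (m+1)) (Fin (m+1)) ℂ := Tmat f (m+1) with hMdef
  set P : Matrix (Fin m) (Fin m) ℂ := Tmat f m with hPdef
  set A : Matrix (Fin (m+1)) (Fin (m+1)) ℂ := M⁻¹ with hAdef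
  have hMdet : IsUnit M.det := (Matrix.isUnit_iff_isUnit_det M).mp h2
  have hPdet : IsUnit P.det := (Matrix.isUnit_iff_isUnit_det P).mp h1
  have hMA : M * A = 1 := Matrix.mul_nonsing_inv M hMdet
  have hAM : A * M = 1 := Matrix.nonsing_inv_mul M hMdet
  -- persymmetry of the Toeplitz matrix entries
  have entry : ∀ i k : Fin (m+1), M i k = M k.rev i.rev := by
    intro i k
    show f _ = f _
    congr 1
    have hi := i.is_lt
    have hk := k.is_lt
    simp only [Fin.val_rev]
    omega
  -- persymmetry of the inverse
  have hsym : A ⟨0, by omega⟩ ⟨0, by omega⟩ = A (Fin.last m) (Fin.last m) := by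
    have hB : M * (Matrix.of fun i j : Fin (m+1) => A j.rev i.rev) = 1 := by
      ext i j
      rw [Matrix.mul_apply]
      have step1 : ∀ k : Fin (m+1), M i k * (Matrix.of fun i j : Fin (m+1) => A j.rev i.rev) k j
          = A j.rev k.rev * M k.rev i.rev := by
        intro k
        rw [entry i k, Matrix.of_apply, mul_comm]
      rw [Finset.sum_congr rfl fun k _ => step1 k]
      have reindex : ∑ k : Fin (m+1), A j.rev k.rev * M k.rev i.rev
          = ∑ k : Fin (m+1), A j.rev k * M k i.rev := by
        apply Fintype.sum_equiv (Fin.revPerm)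
        intro k
        rfl
      rw [reindex]
      have : (∑ k : Fin (m+1), A j.rev k * M k i.rev) = (A * M) j.rev i.rev := by
        rw [Matrix.mul_apply]
      rw [this, hAM, Matrix.one_apply, Matrix.one_apply]
      by_cases h : i = j
      · simp [h]
      · rw [if_neg h, if_neg]
        intro hc
        exact h (Fin.rev_injective hc).symm
    have hAB : A = Matrix.of fun i j : Fin (m+1) => A j.rev i.rev :=
      Matrix.inv_eq_right_inv hB
    have h00 : A ⟨0, by omega⟩ ⟨0, by omega⟩
        = A (Fin.rev ⟨0, by omega⟩) (Fin.rev ⟨0, by omega⟩) := by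
      conv_lhs => rw [hAB]
      rfl
    rw [h00]
    set_option linter.unreachableTactic false in
    set_option linter.unusedTactic false in
    congr 1 <;> · ext; simp [Fin.val_rev]
  -- the bordering identity
  set α : ℂ := A (Fin.last m) (Fin.last m) with hα
  set N : Matrix (Fin m) (Fin m) ℂ := Matrix.of fun k j : Fin m =>
    α * A k.castSucc j.castSucc - A k.castSucc (Fin.last m) * A (Fin.last m) j.castSucc
    with hNdef
  have hPN : P * N = α • (1 : Matrix (Fin m) (Fin m) ℂ) := by
    ext i j
    have hE : ∀ j' : Fin (m+1),
        (∑ k : Fin m, M i.castSucc k.castSucc * A k.castSucc j')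
          + M i.castSucc (Fin.last m) * A (Fin.last m) j'
        = if i.castSucc = j' then (1:ℂ) else 0 := by
      intro j'
      have := congrFun (congrFun hMA i.castSucc) j'
      rw [Matrix.mul_apply, Fin.sum_univ_castSucc] at this
      rw [this, Matrix.one_apply]
    have hE1 := hE j.castSucc
    have hE2 := hE (Fin.last m)
    rw [if_neg (Fin.castSucc_lt_last i).ne] at hE2
    rw [show (if i.castSucc = j.castSucc then (1:ℂ) else 0) = if i = j then (1:ℂ) else 0 by
      simp [Fin.castSucc_inj]] at hE1
    have expand : (P * N) i j
        = α * (∑ k : Fin m, M i.castSucc k.castSucc * A k.castSucc j.castSucc)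
          - (∑ k : Fin m, M i.castSucc k.castSucc * A k.castSucc (Fin.last m))
            * A (Fin.last m) j.castSucc := by
      rw [Matrix.mul_apply, Finset.mul_sum, Finset.sum_mul, ← Finset.sum_sub_distrib]
      apply Finset.sum_congr rfl
      intro k _
      have hPik : P i k = M i.castSucc k.castSucc := rfl
      rw [hNdef, Matrix.of_apply, hPik]
      ring
    rw [expand, Matrix.smul_apply, Matrix.one_apply, smul_eq_mul]
    by_cases h : i = j
    · rw [if_pos h] at hE1 ⊢
      linear_combination α * hE1 - A (Fin.last m) j.castSucc * hE2
    · rw [if_neg h] at hE1 ⊢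
      linear_combination α * hE1 - A (Fin.last m) j.castSucc * hE2
  have hN : N = α • P⁻¹ := by
    calc N = (P⁻¹ * P) * N := by rw [Matrix.nonsing_inv_mul P hPdet, Matrix.one_mul]
    _ = P⁻¹ * (P * N) := by rw [Matrix.mul_assoc]
    _ = P⁻¹ * (α • 1) := by rw [hPN]
    _ = α • P⁻¹ := by rw [Matrix.mul_smul, Matrix.mul_one]
  have hNzz := congrFun (congrFun hN ⟨0, by omega⟩) ⟨0, by omega⟩
  rw [hNdef, Matrix.of_apply, Matrix.smul_apply, smul_eq_mul] at hNzz
  have hc : (Fin.castSucc (⟨0, by omega⟩ : Fin m)) = (⟨0, by omega⟩ : Fin (m+1)) := rfl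
  have hl : (Fin.last m) = (⟨m, by omega⟩ : Fin (m+1)) := rfl
  rw [hc, hl] at hNzz
  linear_combination hNzz + (A ⟨0, by omega⟩ ⟨0, by omega⟩ - P⁻¹ ⟨0, by omega⟩ ⟨0, by omega⟩) * hsym
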